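/- Let μ be a σ-finite measure on X, x ∈ X, and m ∈ ℕ. For every measurable function g : X^m → [0,∞], one has (μ+δ_x)^[m](g) = μ^[m](g) + ∑_{i=1}^m (μ+δ_x)^[m−1](g_i(x,·)), where g_i(x, y₁,…,y_{m−1}) denotes g evaluated at the point whose i-th coordinate is x and whose remaining coordinates are filled in order with y₁,…,y_{m−1}. -/

import Mathlib

open MeasureTheory ProbabilityTheory Filter
open scoped ENNReal Classical

noncomputable section

variable {X : Type*} [MeasurableSpace X]

/-- The measure `μ^[n]` on `X^n`, defined recursively by adding Dirac masses. -/
def seqM (μ : Measure X) : (n : ℕ) → Measure (Fin n → X)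
  | 0 => Measure.dirac (fun i => i.elim0)
  | n + 1 => (seqM μ n).bind
      (fun x => (μ + ∑ i, Measure.dirac (x i)).map (Fin.snoc x))

/-- The rising factorial `w^{(n)} = w (w+1) ⋯ (w+n-1)`. -/
def risingFac (w : ℝ) (n : ℕ) : ℝ := ∏ i ∈ Finset.range n, (w + i)

/-- The Dirichlet distribution, realized as the law of normalized independent
Gamma random variables (with the convention `Gamma(0) = δ₀`). -/
def dirichletLaw {k : ℕ} (α : Fin k → ℝ) : Measure (Fin k → ℝ) :=
  (Measure.pi (fun i => if 0 < α i then gammaMeasure (α i) 1 else Measure.dirac 0)).map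
    (fun y i => y i / ∑ j, y j)

/-- `Q` is the law of a Dirichlet–Ferguson process with parameter measure `ρ`. -/
def IsDFLaw (ρ : Measure X) (Q : Measure (Measure X)) : Prop :=
  IsProbabilityMeasure Q ∧ (∀ᵐ μ ∂Q, IsProbabilityMeasure μ) ∧
    ∀ (k : ℕ) (B : Fin k → Set X), (∀ i, MeasurableSet (B i)) →
      Pairwise (Function.onFun Disjoint B) → (⋃ i, B i) = Set.univ →
      Q.map (fun μ i => (μ (B i)).toReal) = dirichletLaw (fun i => (ρ (B i)).toReal)

/-- `ζ` is a Dirichlet–Ferguson process with parameter measure `ρ` on `(Ω, P)`. -/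
def IsDF {Ω : Type*} [MeasurableSpace Ω] (ρ : Measure X) (P : Measure Ω)
    (ζ : Ω → Measure X) : Prop :=
  Measurable ζ ∧ IsDFLaw ρ (P.map ζ)

/-- The Campbell measure of the random measure `ζ`. -/
def campbell {Ω : Type*} [MeasurableSpace Ω] (P : Measure Ω) (ζ : Ω → Measure X) :
    Measure (Ω × X) :=
  P.bind (fun ω => (ζ ω).map (fun x => (ω, x)))

/-- The space `H_n` of symmetric, conditionally centered functions in `L²(ρ^[n])`. -/
def memH (ρ : Measure X) : (n : ℕ) → ((Fin n → X) → ℝ) → Prop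
  | 0, g => MemLp g 2 (seqM ρ 0)
  | n + 1, g => MemLp g 2 (seqM ρ (n + 1)) ∧
      (∀ π : Equiv.Perm (Fin (n + 1)),
        (fun x => g (x ∘ π)) =ᵐ[seqM ρ (n + 1)] g) ∧
      ∀ᵐ x ∂ seqM ρ n,
        ∫ t, g (Fin.snoc x t) ∂(ρ + ∑ i, Measure.dirac (x i)) = 0

/-- The multiple integral `ζⁿ(f)(ω) = ∫ f d(ζ ω)ⁿ`. -/
def chaosI {Ω : Type*} [MeasurableSpace Ω] (ζ : Ω → Measure X) (n : ℕ)
    (f : (Fin n → X) → ℝ) (ω : Ω) : ℝ :=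
  ∫ z, f z ∂ Measure.pi (fun _ : Fin n => ζ ω)

/-- The total mass `θ = ρ(X)` as a real number. -/
def θr (ρ : Measure X) : ℝ := (ρ Set.univ).toReal

/-- `(θ+n-1) n n!/θ^{(2n)}` at chaos level `n+1`. -/
def gradDomCoeff (ρ : Measure X) (n : ℕ) : ℝ :=
  (θr ρ + n) * ((n : ℝ) + 1) * (Nat.factorial (n + 1) : ℝ) /
    risingFac (θr ρ) (2 * (n + 1))

/-- `F ∈ dom(∇)`, expressed in terms of its chaos kernels `f`. -/
def InDomGrad (ρ : Measure X) (f : (n : ℕ) → (Fin (n + 1) → X) → ℝ) : Prop :=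
  Summable fun n => gradDomCoeff ρ n * ∫ z, (f n z) ^ 2 ∂ seqM ρ (n + 1)

/-- Partial sums of the Malliavin gradient series. -/
def gradPartial {Ω : Type*} [MeasurableSpace Ω] (ζ : Ω → Measure X)
    (f : (n : ℕ) → (Fin (n + 1) → X) → ℝ) (N : ℕ) (p : Ω × X) : ℝ :=
  ∑ n ∈ Finset.range N, ((n : ℝ) + 1) *
    ((∫ y, f n (Fin.cons p.2 y) ∂ Measure.pi (fun _ : Fin n => ζ p.1)) -
      chaosI ζ (n + 1) (f n) p.1)

/-- `G` is the Malliavin gradient of the functional with chaos kernels `f`: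
the gradient series converges to `G` in `L²(C_ζ)`. -/
def HasGradient {Ω : Type*} [MeasurableSpace Ω] (P : Measure Ω) (ζ : Ω → Measure X)
    (f : (n : ℕ) → (Fin (n + 1) → X) → ℝ) (G : Ω × X → ℝ) : Prop :=
  Tendsto (fun N => eLpNorm (fun p => G p - gradPartial ζ f N p) 2 (campbell P ζ))
    atTop (nhds 0)

/-- `F = c₀ + ∑_{n≥1} ζⁿ(fₙ)` with convergence in `L²(P)`. -/
def IsChaosExp {Ω : Type*} [MeasurableSpace Ω] (P : Measure Ω) (ζ : Ω → Measure X)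
    (c₀ : ℝ) (f : (n : ℕ) → (Fin (n + 1) → X) → ℝ) (F : Ω → ℝ) : Prop :=
  Tendsto (fun N => eLpNorm
    (fun ω => F ω - c₀ - ∑ n ∈ Finset.range N, chaosI ζ (n + 1) (f n) ω) 2 P)
    atTop (nhds 0)

/-- `F ∈ dom(L)`, expressed in terms of its chaos kernels `f`. -/
def InDomL (ρ : Measure X) (f : (n : ℕ) → (Fin (n + 1) → X) → ℝ) : Prop :=
  Summable fun n : ℕ => ((θr ρ + (n : ℝ)) ^ 2 * ((n : ℝ) + 1) ^ 2 * (Nat.factorial (n + 1) : ℝ) /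
      risingFac (θr ρ) (2 * (n + 1))) * ∫ z, (f n z) ^ 2 ∂ seqM ρ (n + 1)

lemma measurable_snoc_pair (n : ℕ) :
    Measurable (fun p : (Fin n → X) × X => (Fin.snoc p.1 p.2 : Fin (n+1) → X)) := by
  refine measurable_pi_lambda _ fun i => ?_
  cases i using Fin.lastCases with
  | last => simpa using measurable_snd
  | cast i =>
    simp
    exact (measurable_pi_apply i).comp measurable_fst

lemma measurable_snoc_left {n : ℕ} (y : Fin n → X) :
    Measurable (fun t : X => (Fin.snoc y t : Fin (n+1) → X)) :=
  (measurable_snoc_pair n).comp (measurable_const.prodMk measurable_id)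

lemma measurable_insertNth {n : ℕ} (i : Fin (n+1)) (x : X) :
    Measurable (fun y : Fin n → X => (i.insertNth x y : Fin (n+1) → X)) := by
  refine measurable_pi_lambda _ fun j => ?_
  refine Fin.succAboveCases i ?_ ?_ j
  · simpa [Fin.insertNth_apply_same] using (measurable_const : Measurable fun _ : Fin n → X => x)
  · intro j'
    simpa [Fin.insertNth_apply_succAbove] using measurable_pi_apply j'

lemma measurable_seqM_kernel (μ : Measure X) [SFinite μ] (n : ℕ) :
    Measurable (fun y : Fin n → X =>
      ((μ + ∑ i, Measure.dirac (y i)).map (Fin.snoc y) : Measure (Fin (n+1) → X))) := by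
  apply Measure.measurable_of_measurable_coe
  intro s hs
  have h1 : ∀ y : Fin n → X, ((μ + ∑ i, Measure.dirac (y i)).map (Fin.snoc y)) s
      = μ ((fun t : X => (Fin.snoc y t : Fin (n+1) → X)) ⁻¹' s) + ∑ i : Fin n,
          s.indicator (fun _ => (1 : ℝ≥0∞)) (Fin.snoc y (y i)) := by
    intro y
    rw [Measure.map_apply (measurable_snoc_left y) hs, Measure.add_apply,
      Measure.finset_sum_apply]
    congr 1
    refine Finset.sum_congr rfl fun i _ => ?_
    rw [Measure.dirac_apply' _ ((measurable_snoc_left y) hs)]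
    simp [Set.indicator_apply]
  simp_rw [h1]
  refine Measurable.add ?_ (Finset.measurable_sum _ fun i _ => ?_)
  · have : ∀ y : Fin n → X, ((fun t : X => (Fin.snoc y t : Fin (n+1) → X)) ⁻¹' s)
        = Prod.mk y ⁻¹' ((fun p : (Fin n → X) × X => (Fin.snoc p.1 p.2 : Fin (n+1) → X)) ⁻¹' s) := by
      intro y; rfl
    simp_rw [this]
    exact measurable_measure_prodMk_left ((measurable_snoc_pair n) hs)
  · have hm : Measurable fun y : Fin n → X => (Fin.snoc y (y i) : Fin (n+1) → X) :=
      (measurable_snoc_pair n).comp (measurable_id.prodMk (measurable_pi_apply i))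
    exact (measurable_const.indicator hs).comp hm

lemma lintegral_seqM_succ (μ : Measure X) [SFinite μ] (n : ℕ) {g : (Fin (n+1) → X) → ℝ≥0∞}
    (hg : Measurable g) :
    ∫⁻ y, g y ∂ seqM μ (n+1)
      = ∫⁻ y, ∫⁻ t, g (Fin.snoc y t) ∂ (μ + ∑ i, Measure.dirac (y i)) ∂ seqM μ n := by
  rw [show seqM μ (n+1) = (seqM μ n).bind
      (fun y => (μ + ∑ i, Measure.dirac (y i)).map (Fin.snoc y)) from rfl,
    Measure.lintegral_bind (measurable_seqM_kernel μ n).aemeasurable hg.aemeasurable]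
  refine lintegral_congr fun y => ?_
  rw [lintegral_map hg (measurable_snoc_left y)]

lemma sum_dirac_insertNth {n : ℕ} (i : Fin (n+1)) (x : X) (y : Fin n → X) :
    (∑ j : Fin (n+1), Measure.dirac ((i.insertNth x y) j))
      = Measure.dirac x + ∑ j : Fin n, Measure.dirac (y j) := by
  rw [Fin.sum_univ_succAbove _ i]
  simp [Fin.insertNth_apply_same, Fin.insertNth_apply_succAbove]

lemma insertNth_snoc_comm {n : ℕ} (i : Fin (n+1)) (x t : X) (y : Fin n → X) :
    ((Fin.castSucc i).insertNth x (Fin.snoc y t) : Fin (n+2) → X)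
      = Fin.snoc (i.insertNth x y) t := by
  funext j
  refine Fin.succAboveCases (Fin.castSucc i) ?_ ?_ j
  · rw [Fin.insertNth_apply_same, Fin.snoc_castSucc, Fin.insertNth_apply_same]
  · intro j'
    rw [Fin.insertNth_apply_succAbove]
    cases j' using Fin.lastCases with
    | last =>
        have h : (Fin.castSucc i).succAbove (Fin.last n) = Fin.last (n+1) := by
          rw [Fin.succAbove_of_le_castSucc _ _ (by simpa using Fin.le_last i), Fin.succ_last]
        rw [h, Fin.snoc_last, Fin.snoc_last]
    | cast j'' =>
        rw [Fin.castSucc_succAbove_castSucc, Fin.snoc_castSucc, Fin.snoc_castSucc,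
          Fin.insertNth_apply_succAbove]

lemma seqM_add_dirac (μ : Measure X) [SigmaFinite μ] (x : X) :
    ∀ (k : ℕ) (g : (Fin (k + 1) → X) → ℝ≥0∞), Measurable g →
    ∫⁻ y, g y ∂ seqM (μ + Measure.dirac x) (k + 1)
      = (∫⁻ y, g y ∂ seqM μ (k + 1))
        + ∑ i : Fin (k + 1),
            ∫⁻ y, g (i.insertNth x y) ∂ seqM (μ + Measure.dirac x) k := by
  intro k
  induction k with
  | zero =>
    intro g hg
    have h0 : seqM (μ + Measure.dirac x) 0 = Measure.dirac (fun i : Fin 0 => i.elim0) := rfl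
    have h0' : seqM μ 0 = Measure.dirac (fun i : Fin 0 => i.elim0) := rfl
    have hsm : Measurable fun y : Fin 0 → X =>
        ∫⁻ t, g (Fin.snoc y t) ∂(μ + Measure.dirac x) :=
      Measurable.lintegral_prod_right' (hg.comp (measurable_snoc_pair 0))
    have hsm' : Measurable fun y : Fin 0 → X => ∫⁻ t, g (Fin.snoc y t) ∂μ :=
      Measurable.lintegral_prod_right' (hg.comp (measurable_snoc_pair 0))
    have e1 : ∫⁻ y, g y ∂ seqM (μ + Measure.dirac x) 1
        = ∫⁻ t, g (Fin.snoc (fun i : Fin 0 => i.elim0) t) ∂(μ + Measure.dirac x) := by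
      rw [lintegral_seqM_succ (μ + Measure.dirac x) 0 hg]
      simp only [Finset.univ_eq_empty, Finset.sum_empty, add_zero]
      rw [h0]
      exact lintegral_dirac' _ hsm
    have e2 : ∫⁻ y, g y ∂ seqM μ 1
        = ∫⁻ t, g (Fin.snoc (fun i : Fin 0 => i.elim0) t) ∂μ := by
      rw [lintegral_seqM_succ μ 0 hg]
      simp only [Finset.univ_eq_empty, Finset.sum_empty, add_zero]
      rw [h0']
      exact lintegral_dirac' _ hsm'
    have e3 : ∫⁻ y, g ((0 : Fin 1).insertNth x y) ∂ seqM (μ + Measure.dirac x) 0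
        = g ((0 : Fin 1).insertNth x (fun i => i.elim0)) := by
      rw [h0]
      exact lintegral_dirac' _ (hg.comp (measurable_insertNth 0 x))
    have e4 : ∫⁻ t, g (Fin.snoc (fun i : Fin 0 => i.elim0) t) ∂Measure.dirac x
        = g (Fin.snoc (fun i : Fin 0 => i.elim0) x) :=
      lintegral_dirac' x (hg.comp (measurable_snoc_left _))
    have he : (Fin.snoc (fun i : Fin 0 => i.elim0) x : Fin 1 → X)
        = (0 : Fin 1).insertNth x (fun i => i.elim0) := by
      funext j
      fin_cases j
      simp [Fin.snoc, Fin.insertNth_apply_same]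
    rw [e1, e2, Fin.sum_univ_one, e3, lintegral_add_measure, e4, he]
  | succ k IH =>
    intro g hg
    have hgp : Measurable fun p : (Fin (k+1) → X) × X => g (Fin.snoc p.1 p.2) :=
      hg.comp (measurable_snoc_pair (k+1))
    set h : (Fin (k+1) → X) → ℝ≥0∞ :=
      fun y => ∫⁻ t, g (Fin.snoc y t) ∂(μ + ∑ i, Measure.dirac (y i)) with hh_def
    have hh : Measurable h := by
      have e : h = fun y => (∫⁻ t, g (Fin.snoc y t) ∂μ)
          + ∑ i : Fin (k+1), g (Fin.snoc y (y i)) := by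
        funext y
        simp only [hh_def]
        rw [lintegral_add_measure, lintegral_finset_sum_measure]
        congr 1
        exact Finset.sum_congr rfl fun i _ =>
          lintegral_dirac' _ (hg.comp (measurable_snoc_left y))
      rw [e]
      exact (Measurable.lintegral_prod_right' hgp).add
        (Finset.measurable_sum _ fun i _ =>
          hg.comp ((measurable_snoc_pair _).comp (measurable_id.prodMk (measurable_pi_apply i))))
    have key : ∀ y : Fin (k+1) → X,
        ∫⁻ t, g (Fin.snoc y t) ∂((μ + Measure.dirac x) + ∑ i, Measure.dirac (y i))
          = h y + g (Fin.snoc y x) := by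
      intro y
      have e4 : ∫⁻ t, g (Fin.snoc y t) ∂Measure.dirac x = g (Fin.snoc y x) :=
        lintegral_dirac' x (hg.comp (measurable_snoc_left y))
      rw [add_right_comm μ (Measure.dirac x) _, lintegral_add_measure, e4]
    calc ∫⁻ y, g y ∂ seqM (μ + Measure.dirac x) (k + 1 + 1)
        = ∫⁻ y, (h y + g (Fin.snoc y x)) ∂ seqM (μ + Measure.dirac x) (k + 1) := by
          rw [lintegral_seqM_succ (μ + Measure.dirac x) (k+1) hg]
          exact lintegral_congr key
      _ = (∫⁻ y, h y ∂ seqM (μ + Measure.dirac x) (k + 1))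
            + ∫⁻ y, g (Fin.snoc y x) ∂ seqM (μ + Measure.dirac x) (k + 1) :=
          lintegral_add_left hh _
      _ = ((∫⁻ y, h y ∂ seqM μ (k + 1))
            + ∑ i : Fin (k + 1), ∫⁻ y, h (i.insertNth x y) ∂ seqM (μ + Measure.dirac x) k)
            + ∫⁻ y, g ((Fin.last (k+1)).insertNth x y) ∂ seqM (μ + Measure.dirac x) (k + 1) := by
          rw [IH h hh]
          simp only [Fin.insertNth_last']
      _ = ((∫⁻ y, g y ∂ seqM μ (k + 1 + 1))
            + ∑ i : Fin (k + 1), ∫⁻ y, g ((Fin.castSucc i).insertNth x y)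
                ∂ seqM (μ + Measure.dirac x) (k + 1))
            + ∫⁻ y, g ((Fin.last (k+1)).insertNth x y) ∂ seqM (μ + Measure.dirac x) (k + 1) := by
          congr 1
          congr 1
          · exact (lintegral_seqM_succ μ (k+1) hg).symm
          · refine Finset.sum_congr rfl fun i _ => ?_
            have e5 : ∫⁻ y, g ((Fin.castSucc i).insertNth x y)
                  ∂ seqM (μ + Measure.dirac x) (k + 1)
                = ∫⁻ y, ∫⁻ t, g ((Fin.castSucc i).insertNth x (Fin.snoc y t))
                    ∂((μ + Measure.dirac x) + ∑ j, Measure.dirac (y j))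
                    ∂ seqM (μ + Measure.dirac x) k :=
              lintegral_seqM_succ (μ + Measure.dirac x) k
                (hg.comp (measurable_insertNth (Fin.castSucc i) x))
            rw [e5]
            refine lintegral_congr fun y => ?_
            simp only [hh_def]
            rw [sum_dirac_insertNth, ← add_assoc]
            refine lintegral_congr fun t => ?_
            rw [insertNth_snoc_comm]
      _ = (∫⁻ y, g y ∂ seqM μ (k + 1 + 1))
            + ∑ i : Fin (k + 1 + 1), ∫⁻ y, g (i.insertNth x y)
                ∂ seqM (μ + Measure.dirac x) (k + 1) := by
          rw [Fin.sum_univ_castSucc (n := k + 1), ← add_assoc]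


end
theorem statement3 {X : Type*} [MeasurableSpace X] (μ : MeasureTheory.Measure X)
    [MeasureTheory.SigmaFinite μ] (x : X) (k : ℕ)
    (g : (Fin (k + 1) → X) → ℝ≥0∞) (hg : Measurable g) :
    ∫⁻ y, g y ∂ seqM (μ + MeasureTheory.Measure.dirac x) (k + 1)
      = (∫⁻ y, g y ∂ seqM μ (k + 1))
        + ∑ i : Fin (k + 1),
            ∫⁻ y, g (i.insertNth x y) ∂ seqM (μ + MeasureTheory.Measure.dirac x) k :=
  seqM_add_dirac μ x k g hg
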